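/- Lemma 5 (expected regret of the action selection kernel under its own model). Let A be a finite action set with |A| = K ≥ 2, let μ be a probability measure on a context space X, let f̂ : X × A → [0,1] be measurable, let γ > 0, and let p be the action selection kernel associated with f̂ and γ. Then E_{x∼μ}[ Σ_{a∈A} p(a|x) · ( f̂(x, â(x)) − f̂(x,a) ) ] ≤ K/γ, where â(x) ∈ argmax_a f̂(x,a). -/

import Mathlib

open Finset MeasureTheory

noncomputable section

/-- The action selection kernel associated with a model `fhat`, a predicted-best-action map
`ahat`, and exploitation parameter `γ`. -/
def selKernel {X : Type*} (K : ℕ) (fhat : X → Fin K → ℝ) (ahat : X → Fin K)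
    (γ : ℝ) (x : X) (a : Fin K) : ℝ :=
  if a = ahat x then
    1 - ∑ a' ∈ univ.filter (· ≠ ahat x), 1 / (K + γ * (fhat x (ahat x) - fhat x a'))
  else 1 / (K + γ * (fhat x (ahat x) - fhat x a))

/-- Lemma 5: the expected regret of the action selection kernel, measured with respect to its
own model `fhat`, is at most `K/γ`:
`E_{x∼μ}[ Σ_a p(a|x)·(fhat(x, ahat x) − fhat(x,a)) ] ≤ K/γ`. -/
theorem selKernel_expected_model_regret {X : Type*} [MeasurableSpace X]
    (μ : Measure X) [IsProbabilityMeasure μ]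
    (K : ℕ) (hK : 2 ≤ K)
    (fhat : X → Fin K → ℝ) (hmeas : ∀ a, Measurable fun x => fhat x a)
    (hfhat : ∀ x a, fhat x a ∈ Set.Icc (0:ℝ) 1)
    (γ : ℝ) (hγ : 0 < γ)
    (ahat : X → Fin K) (hahat : ∀ x a, fhat x a ≤ fhat x (ahat x)) :
    ∫ x, ∑ a : Fin K, selKernel K fhat ahat γ x a * (fhat x (ahat x) - fhat x a) ∂μ
      ≤ K / γ := by
  have hbound : ∀ x, ∑ a : Fin K, selKernel K fhat ahat γ x a * (fhat x (ahat x) - fhat x a) ≤ K / γ := by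
    intro x
    have h1 : ∀ a : Fin K, selKernel K fhat ahat γ x a * (fhat x (ahat x) - fhat x a) ≤ 1 / γ := by
      intro a
      by_cases ha : a = ahat x
      · rw [ha, sub_self, mul_zero]
        positivity
      · unfold selKernel
        rw [if_neg ha]
        have hd0 : 0 ≤ fhat x (ahat x) - fhat x a := sub_nonneg.2 (hahat x a)
        have hK2 : (2:ℝ) ≤ (K:ℝ) := by exact_mod_cast hK
        have hden : (0:ℝ) < K + γ * (fhat x (ahat x) - fhat x a) := by nlinarith
        rw [div_mul_eq_mul_div, one_mul, div_le_div_iff₀ hden hγ]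
        nlinarith
    calc ∑ a : Fin K, selKernel K fhat ahat γ x a * (fhat x (ahat x) - fhat x a)
        ≤ ∑ _a : Fin K, 1 / γ := Finset.sum_le_sum (fun a _ => h1 a)
      _ = K / γ := by
        rw [Finset.sum_const, Finset.card_univ, Fintype.card_fin, nsmul_eq_mul]
        ring
  by_cases hint : Integrable (fun x => ∑ a : Fin K, selKernel K fhat ahat γ x a * (fhat x (ahat x) - fhat x a)) μ
  · calc ∫ x, ∑ a : Fin K, selKernel K fhat ahat γ x a * (fhat x (ahat x) - fhat x a) ∂μ
        ≤ ∫ _x, (K / γ : ℝ) ∂μ := integral_mono hint (integrable_const _) hbound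
      _ = K / γ := by simp
  · rw [integral_undef hint]
    positivity
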